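/- arXiv:1303.6042 — 2 statements merged into one kernel-verified Lean document; each statement's English description precedes it below -/
import Mathlib

section
/- The pick-freeze identity holds: Cov(Y, Y') = Var(E(Y | X)), where Y = η(X,Z) and Y' = η(X,Z'). -/
open MeasureTheory ProbabilityTheory Filter
open scoped ENNReal NNReal Topology

private lemma variance_congr_ae {Ω : Type*} [MeasurableSpace Ω] {μ : Measure Ω}
    {f g : Ω → ℝ} (h : f =ᵐ[μ] g) : variance f μ = variance g μ := by
  have hint : ∫ ω, f ω ∂μ = ∫ ω, g ω ∂μ := integral_congr_ae h
  unfold ProbabilityTheory.variance ProbabilityTheory.evariance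
  congr 1
  refine lintegral_congr_ae (h.mono fun ω hω => ?_)
  simp only [hω, hint]

theorem stmt1 {Ω α β : Type*} [MeasurableSpace Ω] [MeasurableSpace α] [MeasurableSpace β]
    {μ : Measure Ω} [IsProbabilityMeasure μ]
    {X : Ω → α} {Z Z' : Ω → β} (hX : Measurable X) (hZ : Measurable Z) (hZ' : Measurable Z')
    (hind : IndepFun X (fun ω => (Z ω, Z' ω)) μ) (hZZ' : IndepFun Z Z' μ)
    (hid : IdentDistrib Z' Z μ μ)
    {η : α × β → ℝ} (hη : Measurable η)
    (hY2 : MemLp (fun ω => η (X ω, Z ω)) 2 μ) :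
    (∫ ω, η (X ω, Z ω) * η (X ω, Z' ω) ∂μ)
      - (∫ ω, η (X ω, Z ω) ∂μ) * (∫ ω, η (X ω, Z' ω) ∂μ)
    = variance (μ[(fun ω => η (X ω, Z ω)) | MeasurableSpace.comap X inferInstance]) μ := by
  have hXZm : Measurable (fun ω => (X ω, Z ω)) := hX.prodMk hZ
  have hXZ'm : Measurable (fun ω => (X ω, Z' ω)) := hX.prodMk hZ'
  have hZZ'm : Measurable (fun ω => (Z ω, Z' ω)) := hZ.prodMk hZ'
  set ν := μ.map X with hν
  set κ := μ.map Z with hκ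
  haveI : IsProbabilityMeasure ν := Measure.isProbabilityMeasure_map hX.aemeasurable
  haveI : IsProbabilityMeasure κ := Measure.isProbabilityMeasure_map hZ.aemeasurable
  have hXZ : IndepFun X Z μ := hind.comp measurable_id measurable_fst
  have hXZ' : IndepFun X Z' μ := hind.comp measurable_id measurable_snd
  have hmapZ' : μ.map Z' = κ := hid.map_eq
  have hmapXZ : μ.map (fun ω => (X ω, Z ω)) = ν.prod κ :=
    (indepFun_iff_map_prod_eq_prod_map_map hX.aemeasurable hZ.aemeasurable).mp hXZ
  have hmapXZ' : μ.map (fun ω => (X ω, Z' ω)) = ν.prod κ := by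
    rw [(indepFun_iff_map_prod_eq_prod_map_map hX.aemeasurable hZ'.aemeasurable).mp hXZ', hmapZ']
  have hmapZZ' : μ.map (fun ω => (Z ω, Z' ω)) = κ.prod κ := by
    rw [(indepFun_iff_map_prod_eq_prod_map_map hZ.aemeasurable hZ'.aemeasurable).mp hZZ', hmapZ']
  have hmapBig : μ.map (fun ω => (X ω, (Z ω, Z' ω))) = ν.prod (κ.prod κ) := by
    rw [(indepFun_iff_map_prod_eq_prod_map_map hX.aemeasurable hZZ'm.aemeasurable).mp hind,
      hmapZZ']
  -- η is L² on the product measure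
  have hmemη : MemLp η 2 (ν.prod κ) := by
    have h : MemLp η 2 (μ.map (fun ω => (X ω, Z ω))) :=
      (memLp_map_measure_iff hη.aestronglyMeasurable hXZm.aemeasurable).mpr hY2
    rwa [hmapXZ] at h
  have hintη : Integrable η (ν.prod κ) := hmemη.integrable one_le_two
  have hintη2 : Integrable (fun p => η p ^ 2) (ν.prod κ) := hmemη.integrable_sq
  set m : α → ℝ := fun x => ∫ z, η (x, z) ∂κ with hm_def
  have hm_sm : StronglyMeasurable m := hη.stronglyMeasurable.integral_prod_right'
  have hm_int : Integrable m ν := hintη.integral_prod_left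
  set w : α → ℝ := fun x => ∫ z, η (x, z) ^ 2 ∂κ with hw_def
  have hw_int : Integrable w ν := hintη2.integral_prod_left
  -- Jensen: m x ^ 2 ≤ w x a.e.
  have hsq : ∀ᵐ x ∂ν, m x ^ 2 ≤ w x := by
    filter_upwards [hintη.prod_right_ae, hintη2.prod_right_ae] with x h1 h2
    have hconv : ConvexOn ℝ Set.univ (fun t : ℝ => t ^ 2) := Even.convexOn_pow even_two
    exact hconv.map_integral_le ((continuous_pow 2).continuousOn) isClosed_univ
      (Filter.Eventually.of_forall fun _ => Set.mem_univ _) h1 h2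
  have hm2_int : Integrable (fun x => m x ^ 2) ν := by
    refine Integrable.mono' hw_int ((hm_sm.measurable.pow_const 2).aestronglyMeasurable) ?_
    filter_upwards [hsq] with x hx
    rwa [Real.norm_eq_abs, abs_of_nonneg (sq_nonneg _)]
  have hmem_m : MemLp m 2 ν := (memLp_two_iff_integrable_sq hm_sm.aestronglyMeasurable).mpr hm2_int
  have hMPX : MeasurePreserving X μ ν := ⟨hX, hν.symm⟩
  have hmemmX : MemLp (fun ω => m (X ω)) 2 μ := hmem_m.comp_measurePreserving hMPX
  -- conditional expectation identification
  have hmX : MeasurableSpace.comap X inferInstance ≤ _ := hX.comap_le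
  haveI : SigmaFinite (μ.trim hmX) := (isFiniteMeasure_trim hmX).toSigmaFinite
  have hYint : Integrable (fun ω => η (X ω, Z ω)) μ := hY2.integrable one_le_two
  have hXcm : Measurable[MeasurableSpace.comap X inferInstance] X :=
    measurable_iff_comap_le.mpr le_rfl
  have hgm : AEStronglyMeasurable[MeasurableSpace.comap X inferInstance]
      (fun ω => m (X ω)) μ :=
    (hm_sm.comp_measurable hXcm).aestronglyMeasurable
  have hcond : (fun ω => m (X ω))
      =ᵐ[μ] μ[(fun ω => η (X ω, Z ω)) | MeasurableSpace.comap X inferInstance] := by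
    refine ae_eq_condExp_of_forall_setIntegral_eq hmX hYint
      (fun s _ _ => (((memLp_one_iff_integrable.mpr hm_int).comp_measurePreserving hMPX).integrable le_rfl).integrableOn)
      (fun s hs _ => ?_) hgm
    obtain ⟨A, hA, rfl⟩ := hs
    have hpre : (fun ω => (X ω, Z ω)) ⁻¹' (A ×ˢ Set.univ) = X ⁻¹' A := by ext ω; simp
    calc ∫ ω in X ⁻¹' A, m (X ω) ∂μ
        = ∫ x in A, m x ∂ν := by
          rw [hν, setIntegral_map hA hm_sm.aestronglyMeasurable hX.aemeasurable]
      _ = ∫ p in A ×ˢ Set.univ, η p ∂(ν.prod κ) := by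
          rw [setIntegral_prod _ hintη.integrableOn]
          simp only [Measure.restrict_univ, hm_def]
      _ = ∫ ω in X ⁻¹' A, η (X ω, Z ω) ∂μ := by
          rw [← hmapXZ, setIntegral_map (hA.prod MeasurableSet.univ) hη.aestronglyMeasurable
            hXZm.aemeasurable, hpre]
  -- the three integrals
  have hI1 : ∫ ω, η (X ω, Z ω) ∂μ = ∫ x, m x ∂ν := by
    have h1 : ∫ p, η p ∂(ν.prod κ) = ∫ ω, η (X ω, Z ω) ∂μ := by
      rw [← hmapXZ, integral_map hXZm.aemeasurable hη.aestronglyMeasurable]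
    rw [← h1, integral_prod _ hintη]
  have hI1' : ∫ ω, η (X ω, Z' ω) ∂μ = ∫ x, m x ∂ν := by
    have h1 : ∫ p, η p ∂(ν.prod κ) = ∫ ω, η (X ω, Z' ω) ∂μ := by
      rw [← hmapXZ', integral_map hXZ'm.aemeasurable hη.aestronglyMeasurable]
    rw [← h1, integral_prod _ hintη]
  -- the mixed second moment
  set F : α × β × β → ℝ := fun p => η (p.1, p.2.1) * η (p.1, p.2.2) with hF_def
  have hFm : Measurable F :=
    (hη.comp (measurable_fst.prodMk (measurable_fst.comp measurable_snd))).mul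
      (hη.comp (measurable_fst.prodMk (measurable_snd.comp measurable_snd)))
  have hπ1 : MeasurePreserving (fun p : α × β × β => (p.1, p.2.1))
      (ν.prod (κ.prod κ)) (ν.prod κ) :=
    (MeasurePreserving.id ν).prod ⟨measurable_fst, by simp⟩
  have hπ2 : MeasurePreserving (fun p : α × β × β => (p.1, p.2.2))
      (ν.prod (κ.prod κ)) (ν.prod κ) :=
    (MeasurePreserving.id ν).prod ⟨measurable_snd, by simp⟩
  have hF1 : MemLp (fun p : α × β × β => η (p.1, p.2.1)) 2 (ν.prod (κ.prod κ)) :=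
    hmemη.comp_measurePreserving hπ1
  have hF2 : MemLp (fun p : α × β × β => η (p.1, p.2.2)) 2 (ν.prod (κ.prod κ)) :=
    hmemη.comp_measurePreserving hπ2
  have hFint : Integrable F (ν.prod (κ.prod κ)) := by
    have hhalf : (1 : ℝ≥0∞) / 1 = 1 / 2 + 1 / 2 := by
      rw [ENNReal.div_add_div_same, one_add_one_eq_two,
        ENNReal.div_self two_ne_zero ENNReal.ofNat_ne_top, div_one]
    exact ((hF2.smul hF1 (r := 1)).integrable le_rfl).congr
      (Filter.Eventually.of_forall fun p => rfl)
  have hI2 : ∫ ω, η (X ω, Z ω) * η (X ω, Z' ω) ∂μ = ∫ x, m x * m x ∂ν := by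
    have h1 : ∫ p, F p ∂(ν.prod (κ.prod κ)) = ∫ ω, η (X ω, Z ω) * η (X ω, Z' ω) ∂μ := by
      rw [← hmapBig, integral_map (hX.prodMk hZZ'm).aemeasurable hFm.aestronglyMeasurable]
    rw [← h1, integral_prod _ hFint]
    refine integral_congr_ae (Filter.Eventually.of_forall fun x => ?_)
    exact integral_prod_mul (fun z => η (x, z)) (fun z => η (x, z))
  -- put everything together
  rw [hI1, hI1', hI2, ← variance_congr_ae hcond, variance_eq_sub hmemmX]
  have e1 : ∫ ω, m (X ω) ∂μ = ∫ x, m x ∂ν := by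
    rw [hν, integral_map hX.aemeasurable hm_sm.aestronglyMeasurable]
  have e2 : ∫ ω, m (X ω) ^ 2 ∂μ = ∫ x, m x ^ 2 ∂ν := by
    rw [hν, integral_map hX.aemeasurable
      (hm_sm.measurable.pow_const 2).aestronglyMeasurable]
  simp only [Pi.pow_apply]
  rw [e1, e2]
  rw [show (∫ x, m x * m x ∂ν) = ∫ x, m x ^ 2 ∂ν from by simp [pow_two]]
  ring
end

section
/- The pick-freeze estimator T_N^η = [ (1/N)Σ Y_i Y_i' − ((1/N)Σ (Y_i+Y_i')/2)^2 ] / [ (1/N)Σ (Y_i^2+(Y_i')^2)/2 − ((1/N)Σ (Y_i+Y_i')/2)^2 ] converges almost surely to S as N → ∞. -/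
open MeasureTheory ProbabilityTheory Filter
open scoped ENNReal NNReal Topology

lemma variance_congr' {Ω : Type*} {_ : MeasurableSpace Ω} {μ : Measure Ω} {f g : Ω → ℝ}
    (h : f =ᵐ[μ] g) : variance f μ = variance g μ := by
  unfold ProbabilityTheory.variance ProbabilityTheory.evariance
  rw [integral_congr_ae h]
  congr 1
  exact lintegral_congr_ae (h.mono fun x hx => by simp only [hx])

lemma sq_enorm_integral_le {β : Type*} {_ : MeasurableSpace β} (ν : Measure β)
    [IsProbabilityMeasure ν] (f : β → ℝ) (hf : AEStronglyMeasurable f ν) :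
    (‖∫ z, f z ∂ν‖₊ : ℝ≥0∞) ^ 2 ≤ ∫⁻ z, (‖f z‖₊ : ℝ≥0∞) ^ 2 ∂ν := by
  have h1 : (‖∫ z, f z ∂ν‖₊ : ℝ≥0∞) ≤ ∫⁻ z, (‖f z‖₊ : ℝ≥0∞) ∂ν :=
    enorm_integral_le_lintegral_enorm _
  have h2 : ∫⁻ z, (‖f z‖₊ : ℝ≥0∞) ∂ν ≤ (∫⁻ z, (‖f z‖₊ : ℝ≥0∞) ^ 2 ∂ν) ^ (1/(2:ℝ)) := by
    have := ENNReal.lintegral_mul_le_Lp_mul_Lq ν (p := 2) (q := 2) Real.HolderConjugate.two_two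
      (f := fun z => (‖f z‖₊ : ℝ≥0∞)) (g := fun _ => 1)
      hf.enorm aemeasurable_const
    simpa using this
  calc (‖∫ z, f z ∂ν‖₊ : ℝ≥0∞) ^ 2 ≤ ((∫⁻ z, (‖f z‖₊ : ℝ≥0∞) ^ 2 ∂ν) ^ (1/(2:ℝ))) ^ 2 := by
        exact pow_le_pow_left' (h1.trans h2) 2
    _ = ∫⁻ z, (‖f z‖₊ : ℝ≥0∞) ^ 2 ∂ν := by
        rw [← ENNReal.rpow_natCast _ 2, ← ENNReal.rpow_mul]
        norm_num

lemma ennreal_rpow_two (x : ℝ≥0∞) : x ^ (2:ℝ) = x ^ (2:ℕ) := by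
  rw [← ENNReal.rpow_natCast x 2]; norm_num


theorem stmt7 {Ω α β : Type*} [MeasurableSpace Ω] [MeasurableSpace α] [MeasurableSpace β]
    {μ : Measure Ω} [IsProbabilityMeasure μ]
    {X : Ω → α} {Z Z' : Ω → β} (hX : Measurable X) (hZ : Measurable Z) (hZ' : Measurable Z')
    (hind : IndepFun X (fun ω => (Z ω, Z' ω)) μ) (hZZ' : IndepFun Z Z' μ)
    (hid : IdentDistrib Z' Z μ μ)
    {η : α × β → ℝ} (hη : Measurable η)
    (hY4 : MemLp (fun ω => η (X ω, Z ω)) 4 μ)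
    (hvar : 0 < variance (fun ω => η (X ω, Z ω)) μ)
    {W : ℕ → Ω → ℝ × ℝ} (hWmeas : ∀ i, Measurable (W i))
    (hWindep : iIndepFun W μ)
    (hWid : ∀ i, IdentDistrib (W i) (fun ω => (η (X ω, Z ω), η (X ω, Z' ω))) μ μ) :
    ∀ᵐ ω ∂μ, Tendsto (fun N : ℕ =>
      ((N : ℝ)⁻¹ * ∑ i ∈ Finset.range N, (W i ω).1 * (W i ω).2
        - ((N : ℝ)⁻¹ * ∑ i ∈ Finset.range N, ((W i ω).1 + (W i ω).2) / 2) ^ 2)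
      / ((N : ℝ)⁻¹ * ∑ i ∈ Finset.range N, (((W i ω).1) ^ 2 + ((W i ω).2) ^ 2) / 2
        - ((N : ℝ)⁻¹ * ∑ i ∈ Finset.range N, ((W i ω).1 + (W i ω).2) / 2) ^ 2))
      atTop
      (𝓝 (variance (μ[(fun ω => η (X ω, Z ω)) | MeasurableSpace.comap X inferInstance]) μ
            / variance (fun ω => η (X ω, Z ω)) μ)) := by
  set Y : Ω → ℝ := fun ω => η (X ω, Z ω) with hYdef
  set Y' : Ω → ℝ := fun ω => η (X ω, Z' ω) with hY'def
  set m : Measure α := μ.map X with hm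
  set ν : Measure β := μ.map Z with hν
  have hmP : IsProbabilityMeasure m := Measure.isProbabilityMeasure_map hX.aemeasurable
  have hνP : IsProbabilityMeasure ν := Measure.isProbabilityMeasure_map hZ.aemeasurable
  have hZ'ν : μ.map Z' = ν := hid.map_eq
  -- independence consequences
  have hXZ : IndepFun X Z μ := hind.comp measurable_id measurable_fst
  have hXZ'i : IndepFun X Z' μ := hind.comp measurable_id measurable_snd
  -- key maps
  have hmapXZ : μ.map (fun ω => (X ω, Z ω)) = m.prod ν :=
    (indepFun_iff_map_prod_eq_prod_map_map hX.aemeasurable hZ.aemeasurable).1 hXZ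
  have hmapXZ' : μ.map (fun ω => (X ω, Z' ω)) = m.prod ν := by
    rw [(indepFun_iff_map_prod_eq_prod_map_map hX.aemeasurable hZ'.aemeasurable).1 hXZ'i, hZ'ν]
  have hmapZZ' : μ.map (fun ω => (Z ω, Z' ω)) = ν.prod ν := by
    rw [(indepFun_iff_map_prod_eq_prod_map_map hZ.aemeasurable hZ'.aemeasurable).1 hZZ', hZ'ν]
  have hmapBig : μ.map (fun ω => (X ω, (Z ω, Z' ω))) = m.prod (ν.prod ν) := by
    rw [(indepFun_iff_map_prod_eq_prod_map_map hX.aemeasurable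
      (hZ.prodMk hZ').aemeasurable).1 hind, hmapZZ']
  -- Y' identically distributed with Y
  have hXZ'id : IdentDistrib (fun ω => (X ω, Z' ω)) (fun ω => (X ω, Z ω)) μ μ :=
    ⟨(hX.prodMk hZ').aemeasurable, (hX.prodMk hZ).aemeasurable, by rw [hmapXZ, hmapXZ']⟩
  have hY'id : IdentDistrib Y' Y μ μ := hXZ'id.comp hη
  have hY'4 : MemLp Y' 4 μ := hY'id.symm.memLp_snd hY4
  have hY2 : MemLp Y 2 μ := hY4.mono_exponent (by norm_num)
  have hY'2 : MemLp Y' 2 μ := hY'4.mono_exponent (by norm_num)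
  have hY1 : Integrable Y μ := hY2.integrable one_le_two
  have hY'1 : Integrable Y' μ := hY'2.integrable one_le_two
  have hYY' : Integrable (fun ω => Y ω * Y' ω) μ := by
    have := hY'2.smul (𝕜 := ℝ) hY2 (r := 1) (hpqr := ⟨by simp [ENNReal.inv_two_add_inv_two, one_div]⟩)
    exact this.integrable le_rfl
  -- the conditional expectation function
  set g : α → ℝ := fun x => ∫ z, η (x, z) ∂ν with hgdef
  have hg_sm : StronglyMeasurable g := hη.stronglyMeasurable.integral_prod_right'
  have hg_meas : Measurable g := hg_sm.measurable
  -- integrability of η over the product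
  have hη_int : Integrable η (m.prod ν) := by
    rw [← hmapXZ]
    exact (integrable_map_measure hη.aestronglyMeasurable
      (hX.prodMk hZ).aemeasurable).2 (by exact hY1)
  have hg_int : Integrable g m := hη_int.integral_prod_left
  have hgX_int : Integrable (fun ω => g (X ω)) μ := by
    have := (integrable_map_measure hg_sm.aestronglyMeasurable hX.aemeasurable).1
      (by rw [← hm] at *; exact hg_int)
    exact this
  -- identification of the conditional expectation
  have hcond : (fun ω => g (X ω)) =ᵐ[μ] μ[Y | MeasurableSpace.comap X inferInstance] := by
    refine ae_eq_condExp_of_forall_setIntegral_eq hX.comap_le hY1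
      (fun s _ _ => hgX_int.integrableOn) (fun s hs _ => ?_) ?_
    · obtain ⟨B, hB, rfl⟩ := hs
      have h1 : ∫ ω in X ⁻¹' B, g (X ω) ∂μ = ∫ x in B, g x ∂m := by
        rw [hm, setIntegral_map hB (by rw [← hm]; exact hg_sm.aestronglyMeasurable)
          hX.aemeasurable]
      have h2 : ∫ ω in X ⁻¹' B, Y ω ∂μ = ∫ x in B, g x ∂m := by
        have hpre : (fun ω => (X ω, Z ω)) ⁻¹' (B ×ˢ Set.univ) = X ⁻¹' B := by
          ext ω; simp
        rw [hYdef]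
        have := setIntegral_map (μ := μ) (g := fun ω => (X ω, Z ω)) (f := η)
          (hB.prod MeasurableSet.univ)
          (by rw [hmapXZ]; exact hη.aestronglyMeasurable) (hX.prodMk hZ).aemeasurable
        rw [hpre] at this
        rw [← this, hmapXZ, setIntegral_prod _ (hη_int.integrableOn)]
        refine setIntegral_congr_fun hB fun x _ => ?_
        rw [Measure.restrict_univ]
      rw [h1, h2]
    · exact (hg_sm.comp_measurable
        (measurable_iff_comap_le.2 le_rfl)).aestronglyMeasurable
  -- g ∘ X is in L²
  have hsq_meas : Measurable fun p : α × β => (‖η p‖₊ : ℝ≥0∞) ^ 2 :=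
    (hη.enorm).pow_const 2
  have hYsq_fin : ∫⁻ ω, (‖Y ω‖₊ : ℝ≥0∞) ^ 2 ∂μ < ∞ := by
    have h := hY2.2
    rw [eLpNorm_eq_lintegral_rpow_enorm_toReal (by norm_num) (by norm_num)] at h
    have h' := (ENNReal.rpow_lt_top_iff_of_pos (by norm_num : (0:ℝ) < 1 / (2:ℝ≥0∞).toReal)).1 h
    have he : (2:ℝ≥0∞).toReal = (2:ℝ) := by norm_num
    rw [he] at h'
    simpa only [ennreal_rpow_two, enorm_eq_nnnorm] using h'
  have hgL2 : MemLp g 2 m := by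
    refine ⟨hg_sm.aestronglyMeasurable, ?_⟩
    rw [eLpNorm_eq_lintegral_rpow_enorm_toReal (by norm_num) (by norm_num)]
    have hb : ∫⁻ x, (‖g x‖₊ : ℝ≥0∞) ^ 2 ∂m
        ≤ ∫⁻ x, ∫⁻ z, (‖η (x, z)‖₊ : ℝ≥0∞) ^ 2 ∂ν ∂m := by
      refine lintegral_mono fun x => ?_
      exact sq_enorm_integral_le ν (fun z => η (x, z))
        (hη.comp measurable_prodMk_left).aestronglyMeasurable
    have h2 : ∫⁻ x, ∫⁻ z, (‖η (x, z)‖₊ : ℝ≥0∞) ^ 2 ∂ν ∂m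
        = ∫⁻ p, (‖η p‖₊ : ℝ≥0∞) ^ 2 ∂(m.prod ν) :=
      (lintegral_prod _ hsq_meas.aemeasurable).symm
    have h3 : ∫⁻ p, (‖η p‖₊ : ℝ≥0∞) ^ 2 ∂(m.prod ν) = ∫⁻ ω, (‖Y ω‖₊ : ℝ≥0∞) ^ 2 ∂μ := by
      rw [← hmapXZ, lintegral_map hsq_meas (hX.prodMk hZ)]
    have hfin : ∫⁻ x, (‖g x‖₊ : ℝ≥0∞) ^ 2 ∂m < ∞ := lt_of_le_of_lt (hb.trans_eq (h2.trans h3)) hYsq_fin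
    have he : (2:ℝ≥0∞).toReal = (2:ℝ) := by norm_num
    rw [he]
    apply ENNReal.rpow_lt_top_of_nonneg (by norm_num)
    simpa only [ennreal_rpow_two, enorm_eq_nnnorm] using hfin.ne
  have hgXL2 : MemLp (fun ω => g (X ω)) 2 μ := by
    have := (memLp_map_measure_iff hg_sm.aestronglyMeasurable hX.aemeasurable).1
      (by rw [← hm]; exact hgL2)
    exact this
  -- integral identities
  have hEY' : ∫ ω, Y' ω ∂μ = ∫ ω, Y ω ∂μ := hY'id.integral_eq
  have hEgX : ∫ ω, g (X ω) ∂μ = ∫ ω, Y ω ∂μ := by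
    rw [integral_congr_ae hcond, integral_condExp hX.comap_le]
  -- the crucial identity : E[Y Y'] = E[g(X)²]
  have hFmeas : Measurable fun p : α × β × β => η (p.1, p.2.1) * η (p.1, p.2.2) := by
    exact (hη.comp (measurable_fst.prodMk (measurable_fst.comp measurable_snd))).mul
      (hη.comp (measurable_fst.prodMk (measurable_snd.comp measurable_snd)))
  have hYY'big : ∫ ω, Y ω * Y' ω ∂μ
      = ∫ p, η (p.1, p.2.1) * η (p.1, p.2.2) ∂(m.prod (ν.prod ν)) := by
    rw [← hmapBig, integral_map (hX.prodMk (hZ.prodMk hZ')).aemeasurable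
      hFmeas.aestronglyMeasurable]
  have hFint : Integrable (fun p : α × β × β => η (p.1, p.2.1) * η (p.1, p.2.2))
      (m.prod (ν.prod ν)) := by
    rw [← hmapBig]
    exact (integrable_map_measure hFmeas.aestronglyMeasurable
      (hX.prodMk (hZ.prodMk hZ')).aemeasurable).2 hYY'
  have hE1 : ∫ ω, Y ω * Y' ω ∂μ = ∫ ω, (g (X ω)) ^ 2 ∂μ := by
    rw [hYY'big, integral_prod _ hFint]
    have hinner : ∀ x, ∫ q : β × β, η (x, q.1) * η (x, q.2) ∂(ν.prod ν) = (g x) ^ 2 := by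
      intro x
      rw [integral_prod_mul (fun z => η (x, z)) (fun z => η (x, z))]
      ring
    have : ∫ x, (∫ q : β × β, η (x, q.1) * η (x, q.2) ∂(ν.prod ν)) ∂m
        = ∫ x, (g x) ^ 2 ∂m := by
      exact integral_congr_ae (Eventually.of_forall hinner)
    rw [this, hm, integral_map hX.aemeasurable]
    exact ((hg_sm.pow 2).aestronglyMeasurable).mono_measure le_rfl
  -- variance identities
  have hvarY : variance Y μ = (∫ ω, (Y ω) ^ 2 ∂μ) - (∫ ω, Y ω ∂μ) ^ 2 := by
    rw [variance_eq_sub hY2]; rfl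
  have hvarC : variance (μ[Y | MeasurableSpace.comap X inferInstance]) μ
      = (∫ ω, Y ω * Y' ω ∂μ) - (∫ ω, Y ω ∂μ) ^ 2 := by
    rw [← variance_congr' hcond, variance_eq_sub hgXL2, hE1, hEgX]; rfl
  -- strong law of large numbers for functionals of W
  have slln : ∀ (φ : ℝ × ℝ → ℝ), Measurable φ →
      Integrable (fun ω => φ (Y ω, Y' ω)) μ →
      ∀ᵐ ω ∂μ, Tendsto (fun n : ℕ => (∑ i ∈ Finset.range n, φ (W i ω)) / n) atTop
        (𝓝 (∫ ω, φ (Y ω, Y' ω) ∂μ)) := by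
    intro φ hφ hint
    have hid0 : ∀ i, IdentDistrib (fun ω => φ (W i ω)) (fun ω => φ (Y ω, Y' ω)) μ μ :=
      fun i => (hWid i).comp hφ
    have h1 : Integrable (fun ω => φ (W 0 ω)) μ := (hid0 0).symm.integrable_snd hint
    have hident : ∀ i, IdentDistrib (fun ω => φ (W i ω)) (fun ω => φ (W 0 ω)) μ μ :=
      fun i => (hid0 i).trans (hid0 0).symm
    have hpair : Pairwise (Function.onFun (IndepFun · · μ) fun i ω => φ (W i ω)) :=
      fun i j hij => (hWindep.indepFun hij).comp hφ hφ
    have h := strong_law_ae_real _ h1 hpair hident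
    have hEeq : μ[fun ω => φ (W 0 ω)] = ∫ ω, φ (Y ω, Y' ω) ∂μ := (hid0 0).integral_eq
    rw [hEeq] at h
    exact h
  -- integrals of the three functionals
  have hEY'sq : ∫ ω, (Y' ω) ^ 2 ∂μ = ∫ ω, (Y ω) ^ 2 ∂μ :=
    (hY'id.comp (measurable_id.pow_const 2)).integral_eq
  have hsum : Integrable (fun ω => (Y ω + Y' ω) / 2) μ := (hY1.add hY'1).div_const 2
  have hYsqI : Integrable (fun ω => (Y ω) ^ 2) μ := by
    have := hY2.integrable_sq
    exact this.congr (Eventually.of_forall fun ω => by simp [pow_two])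
  have hY'sqI : Integrable (fun ω => (Y' ω) ^ 2) μ := by
    have := hY'2.integrable_sq
    exact this.congr (Eventually.of_forall fun ω => by simp [pow_two])
  have hsumsq : Integrable (fun ω => ((Y ω) ^ 2 + (Y' ω) ^ 2) / 2) μ :=
    (hYsqI.add hY'sqI).div_const 2
  -- apply the SLLN to the three functionals
  have L1 := slln (fun p => p.1 * p.2) (measurable_fst.mul measurable_snd) hYY'
  have L2 := slln (fun p => (p.1 + p.2) / 2) ((measurable_fst.add measurable_snd).div_const 2)
    hsum
  have L3 := slln (fun p => (p.1 ^ 2 + p.2 ^ 2) / 2)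
    (((measurable_fst.pow_const 2).add (measurable_snd.pow_const 2)).div_const 2) hsumsq
  -- simplify the limit values
  have hA : ∫ ω, (fun p : ℝ × ℝ => p.1 * p.2) (Y ω, Y' ω) ∂μ = ∫ ω, Y ω * Y' ω ∂μ := rfl
  have hB : ∫ ω, (fun p : ℝ × ℝ => (p.1 + p.2) / 2) (Y ω, Y' ω) ∂μ = ∫ ω, Y ω ∂μ := by
    simp only
    rw [integral_div, integral_add hY1 hY'1, hEY']
    ring
  have hC : ∫ ω, (fun p : ℝ × ℝ => (p.1 ^ 2 + p.2 ^ 2) / 2) (Y ω, Y' ω) ∂μ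
      = ∫ ω, (Y ω) ^ 2 ∂μ := by
    simp only
    rw [integral_div, integral_add hYsqI hY'sqI, hEY'sq]
    ring
  rw [hA] at L1; rw [hB] at L2; rw [hC] at L3
  -- combine
  filter_upwards [L1, L2, L3] with ω h1 h2 h3
  have hden_ne : (∫ ω, (Y ω) ^ 2 ∂μ) - (∫ ω, Y ω ∂μ) ^ 2 ≠ 0 := by
    rw [← hvarY]; exact ne_of_gt hvar
  have htend : Tendsto (fun N : ℕ =>
      ((∑ i ∈ Finset.range N, (W i ω).1 * (W i ω).2) / N
        - ((∑ i ∈ Finset.range N, ((W i ω).1 + (W i ω).2) / 2) / N) ^ 2)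
      / ((∑ i ∈ Finset.range N, (((W i ω).1) ^ 2 + ((W i ω).2) ^ 2) / 2) / N
        - ((∑ i ∈ Finset.range N, ((W i ω).1 + (W i ω).2) / 2) / N) ^ 2)) atTop
      (𝓝 (((∫ ω, Y ω * Y' ω ∂μ) - (∫ ω, Y ω ∂μ) ^ 2)
        / ((∫ ω, (Y ω) ^ 2 ∂μ) - (∫ ω, Y ω ∂μ) ^ 2))) :=
    Tendsto.div (h1.sub ((h2.pow 2))) (h3.sub ((h2.pow 2))) hden_ne
  have heq : variance (μ[Y | MeasurableSpace.comap X inferInstance]) μ / variance Y μ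
      = ((∫ ω, Y ω * Y' ω ∂μ) - (∫ ω, Y ω ∂μ) ^ 2)
        / ((∫ ω, (Y ω) ^ 2 ∂μ) - (∫ ω, Y ω ∂μ) ^ 2) := by
    rw [hvarC, hvarY]
  rw [hYdef] at heq
  rw [heq]
  simpa only [inv_mul_eq_div] using htend
end
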